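/- Fix lattices M ≅ Z^d and a pointed cone σ^∨ ⊂ M_R, rational numbers given via support functions Δ_i(u) of polyhedra Δ_0,…,Δ_m with common pointed tailcone σ satisfying Σ_i Δ_i ⊊ σ. Fix an index j. Then the set S = { (u, v) ∈ (σ^∨ ∩ M) × Z : −⌊Δ_j(u)⌋ ≤ v ≤ Σ_{i≠j} ⌊Δ_i(u)⌋ } is a finitely generated subsemigroup of M × Z. -/

import Mathlib

open Finset

lemma exists_min_gen {ι : Type*} [Fintype ι] {T : Set (ι → ℕ)}
    {b : ι → ℕ} (hb : b ∈ T) (hb0 : b ≠ 0) :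
    ∃ a ∈ T, a ≠ 0 ∧ a ≤ b ∧ ∀ c ∈ T, c ≠ 0 → c ≤ a → c = a := by
  suffices H : ∀ n (b : ι → ℕ), b ∈ T → b ≠ 0 → ∑ i, b i = n →
      ∃ a ∈ T, a ≠ 0 ∧ a ≤ b ∧ ∀ c ∈ T, c ≠ 0 → c ≤ a → c = a from
    H _ b hb hb0 rfl
  intro n
  induction n using Nat.strong_induction_on with
  | _ n IH =>
  intro b hb hb0 hn
  by_cases hmin : ∀ c ∈ T, c ≠ 0 → c ≤ b → c = b
  · exact ⟨b, hb, hb0, le_refl b, hmin⟩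
  · push_neg at hmin
    obtain ⟨c, hcT, hc0, hcb, hcne⟩ := hmin
    have hlt : ∑ i, c i < ∑ i, b i := by
      obtain ⟨i, hi⟩ := Function.ne_iff.1 hcne
      exact Finset.sum_lt_sum (fun i _ => hcb i) ⟨i, mem_univ i, lt_of_le_of_ne (hcb i) hi⟩
    obtain ⟨a, haT, ha0, hac, hamin⟩ := IH _ (hn ▸ hlt) c hcT hc0 rfl
    exact ⟨a, haT, ha0, le_trans hac hcb, hamin⟩

lemma lemA {ι : Type*} [Fintype ι] (T : Set (ι → ℕ))
    (hsub : ∀ a ∈ T, ∀ b ∈ T, a ≤ b → b - a ∈ T) :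
    ∃ F : Finset (ι → ℕ), ↑F ⊆ T ∧
      T ⊆ (AddSubmonoid.closure (↑F : Set (ι → ℕ)) : Set (ι → ℕ)) := by
  classical
  set Mn : Set (ι → ℕ) := {a | a ∈ T ∧ a ≠ 0 ∧ ∀ c ∈ T, c ≠ 0 → c ≤ a → c = a} with hMn
  have hanti : IsAntichain (· ≤ ·) Mn := by
    rintro a ⟨haT, ha0, _⟩ b ⟨hbT, hb0, hbmin⟩ hne hab
    exact hne (hbmin a haT ha0 hab)
  have hpwo : Mn.IsPWO := Set.isPWO_of_wellQuasiOrderedLE Mn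
  have hfin : Mn.Finite := hanti.finite_of_partiallyWellOrderedOn hpwo
  refine ⟨hfin.toFinset, ?_, ?_⟩
  · intro a ha; simp only [Set.Finite.coe_toFinset] at ha; exact ha.1
  · suffices H : ∀ n (b : ι → ℕ), b ∈ T → ∑ i, b i = n →
        b ∈ (AddSubmonoid.closure (↑hfin.toFinset : Set (ι → ℕ)) : Set (ι → ℕ)) from
      fun b hb => H _ b hb rfl
    intro n
    induction n using Nat.strong_induction_on with
    | _ n IH =>
    intro b hb hn
    by_cases hb0 : b = 0
    · subst hb0; exact zero_mem _
    · obtain ⟨a, haT, ha0, hab, hamin⟩ := exists_min_gen hb hb0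
      have haMn : a ∈ Mn := ⟨haT, ha0, hamin⟩
      have hsubT : b - a ∈ T := hsub a haT b hb hab
      have h2 : 0 < ∑ i, a i := by
        obtain ⟨i, hi⟩ := Function.ne_iff.1 ha0
        exact Finset.sum_pos' (fun i _ => Nat.zero_le _) ⟨i, mem_univ i, Nat.pos_of_ne_zero hi⟩
      have hsum : ∑ i, (b - a) i < ∑ i, b i := by
        have h3 : ∑ i, (b - a) i = ∑ i, b i - ∑ i, a i := by
          calc ∑ i, (b - a) i = ∑ i, (b i - a i) := rfl
            _ = ∑ i, b i - ∑ i, a i :=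
              Finset.sum_tsub_distrib univ (fun i _ => hab i)
        have h4 : ∑ i, a i ≤ ∑ i, b i := Finset.sum_le_sum (fun i _ => hab i)
        omega
      have hmem : b - a ∈ (AddSubmonoid.closure (↑hfin.toFinset : Set (ι → ℕ)) : Set (ι → ℕ)) :=
        IH _ (hn ▸ hsum) _ hsubT rfl
      have haF : a ∈ (AddSubmonoid.closure (↑hfin.toFinset : Set (ι → ℕ)) : Set (ι → ℕ)) :=
        AddSubmonoid.subset_closure (by simpa using haMn)
      have : a + (b - a) = b := add_tsub_cancel_of_le hab
      exact this ▸ add_mem haF hmem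


section
variable {ι κ : Type*} [Fintype ι] [Fintype κ] [DecidableEq ι]

noncomputable def psi0 (A : κ → ι → ℤ) : ((ι ⊕ ι) ⊕ κ → ℕ) → (ι → ℤ) :=
  fun c i => (c (.inl (.inl i)) : ℤ) - (c (.inl (.inr i)) : ℤ)

lemma psi0_add (A : κ → ι → ℤ) (a b : (ι ⊕ ι) ⊕ κ → ℕ) :
    psi0 A (a + b) = psi0 A a + psi0 A b := by
  funext i; simp [psi0]; push_cast; ring

lemma lemC (A : κ → ι → ℤ) {P : Type*} [AddCommMonoid P] (π : (ι → ℤ) →+ P) :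
    ∃ F : Finset P, ↑F ⊆ π '' {x : ι → ℤ | ∀ t, 0 ≤ ∑ i, A t i * x i} ∧
      π '' {x : ι → ℤ | ∀ t, 0 ≤ ∑ i, A t i * x i} ⊆
        (AddSubmonoid.closure (↑F : Set P) : Set P) := by
  classical
  set T : Set (ι → ℤ) := {x | ∀ t, 0 ≤ ∑ i, A t i * x i} with hT
  set ψ : ((ι ⊕ ι) ⊕ κ → ℕ) → (ι → ℤ) := psi0 A with hψ
  set U : Set ((ι ⊕ ι) ⊕ κ → ℕ) :=
    {c | ∀ t, ∑ i, A t i * ψ c i = (c (.inr t) : ℤ)} with hU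
  have hUsub : ∀ a ∈ U, ∀ b ∈ U, a ≤ b → b - a ∈ U := by
    intro a ha b hb hab t
    have hψsub : ψ (b - a) = ψ b - ψ a := by
      funext i
      have h1 : (b - a) (.inl (.inl i)) = b (.inl (.inl i)) - a (.inl (.inl i)) := rfl
      have h2 : (b - a) (.inl (.inr i)) = b (.inl (.inr i)) - a (.inl (.inr i)) := rfl
      simp only [hψ, psi0, h1, h2, Pi.sub_apply]
      rw [Nat.cast_sub (hab _), Nat.cast_sub (hab _)]
      ring
    rw [hψsub]
    have h3 : (b - a) (.inr t) = b (.inr t) - a (.inr t) := rfl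
    rw [h3, Nat.cast_sub (hab _)]
    have := ha t; have := hb t
    simp only [Pi.sub_apply, mul_sub, Finset.sum_sub_distrib]
    omega
  obtain ⟨F₀, hF₀U, hUcl⟩ := lemA U hUsub
  have hTim : T = ψ '' U := by
    apply Set.Subset.antisymm
    · intro x hx
      refine ⟨Sum.elim (Sum.elim (fun i => (x i).toNat) (fun i => (-x i).toNat))
        (fun t => (∑ i, A t i * x i).toNat), ?_, ?_⟩
      · intro t
        have hx' : ψ (Sum.elim (Sum.elim (fun i => (x i).toNat) (fun i => (-x i).toNat))
            (fun t => (∑ i, A t i * x i).toNat)) = x := by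
          funext i; simp only [hψ, psi0, Sum.elim_inl, Sum.elim_inr]; omega
        rw [hx']
        simp [Int.toNat_of_nonneg (hx t)]
      · funext i; simp only [hψ, psi0, Sum.elim_inl, Sum.elim_inr]; omega
    · rintro _ ⟨c, hc, rfl⟩
      intro t
      rw [hc t]; positivity
  refine ⟨F₀.image (fun c => π (ψ c)), ?_, ?_⟩
  · intro p hp
    simp only [coe_image, Set.mem_image, mem_coe] at hp
    obtain ⟨c, hc, rfl⟩ := hp
    exact ⟨ψ c, hTim ▸ ⟨c, hF₀U hc, rfl⟩, rfl⟩
  · rintro _ ⟨x, hx, rfl⟩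
    rw [hTim] at hx
    obtain ⟨c, hc, rfl⟩ := hx
    have hc' := hUcl hc
    set φ : ((ι ⊕ ι) ⊕ κ → ℕ) →+ P :=
      { toFun := fun c => π (ψ c)
        map_zero' := by
          show π (ψ 0) = 0
          have : ψ 0 = 0 := by funext i; simp [hψ, psi0]
          rw [this, map_zero]
        map_add' := by
          intro a b
          show π (ψ (a + b)) = π (ψ a) + π (ψ b)
          rw [hψ, psi0_add, map_add] }
    have : φ c ∈ (AddSubmonoid.closure (↑F₀ : Set _)).map φ :=
      AddSubmonoid.mem_map_of_mem φ hc'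
    rw [AddMonoidHom.map_mclosure] at this
    rw [Finset.coe_image]
    exact this
end


lemma clear_denoms {ι : Type*} [Fintype ι] (q : ι → ℚ) :
    ∃ c : ι → ℤ, ∀ x : ι → ℤ,
      (0 ≤ ∑ i, q i * (x i : ℚ)) ↔ (0 ≤ ∑ i, c i * x i) := by
  classical
  set D : ℤ := ∏ i, ((q i).den : ℤ) with hD
  have hDpos : 0 < D := Finset.prod_pos (fun i _ => by positivity)
  have hdvd : ∀ i, ((q i).den : ℤ) ∣ D := fun i => Finset.dvd_prod_of_mem _ (mem_univ i)
  choose e he using hdvd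
  refine ⟨fun i => (q i).num * e i, fun x => ?_⟩
  have hc : ∀ i, ((q i).num * e i : ℚ) = q i * D := by
    intro i
    have hden : ((q i).den : ℚ) ≠ 0 := by positivity
    have h1 : ((q i).num : ℚ) = q i * (q i).den :=
      (div_eq_iff hden).1 (Rat.num_div_den (q i))
    push_cast
    rw [h1, he i]
    push_cast
    ring
  have hsum : ((∑ i, ((q i).num * e i) * x i : ℤ) : ℚ) = D * ∑ i, q i * (x i : ℚ) := by
    push_cast
    rw [Finset.mul_sum]
    congr 1; funext i
    have := hc i
    push_cast at this ⊢
    rw [this]; ring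
  constructor
  · intro h
    have : (0:ℚ) ≤ ((∑ i, ((q i).num * e i) * x i : ℤ) : ℚ) := by
      rw [hsum]; positivity
    exact_mod_cast this
  · intro h
    have h2 : (0:ℚ) ≤ D * ∑ i, q i * (x i : ℚ) := by
      rw [← hsum]; exact_mod_cast h
    have hD' : (0:ℚ) < (D:ℚ) := by exact_mod_cast hDpos
    nlinarith [h2]

lemma gordanQ {ι : Type*} [Fintype ι] [DecidableEq ι] (L : Finset (ι → ℚ))
    {P : Type*} [AddCommMonoid P] (π : (ι → ℤ) →+ P) :
    ∃ F : Finset P,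
      ↑F ⊆ π '' {x : ι → ℤ | ∀ ℓ ∈ L, 0 ≤ ∑ i, ℓ i * (x i : ℚ)} ∧
      π '' {x : ι → ℤ | ∀ ℓ ∈ L, 0 ≤ ∑ i, ℓ i * (x i : ℚ)} ⊆
        (AddSubmonoid.closure (↑F : Set P) : Set P) := by
  classical
  choose c hc using fun ℓ : {ℓ // ℓ ∈ L} => clear_denoms (ι := ι) ℓ.1
  have hset : {x : ι → ℤ | ∀ ℓ ∈ L, 0 ≤ ∑ i, ℓ i * (x i : ℚ)} =
      {x : ι → ℤ | ∀ t : {ℓ // ℓ ∈ L}, 0 ≤ ∑ i, c t i * x i} := by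
    ext x
    constructor
    · intro h t; exact (hc t x).1 (h t.1 t.2)
    · intro h ℓ hℓ; exact (hc ⟨ℓ, hℓ⟩ x).2 (h ⟨ℓ, hℓ⟩)
  rw [hset]
  exact lemC c π

open Pointwise

/-- The convex cone spanned by a set: all finite nonnegative rational combinations. -/
noncomputable def coneSpan {E : Type*} [AddCommGroup E] [Module ℚ E] (S : Set E) : Set E :=
  {x | ∃ (k : ℕ) (c : Fin k → ℚ) (g : Fin k → E),
    (∀ i, 0 ≤ c i) ∧ (∀ i, g i ∈ S) ∧ x = ∑ i, c i • g i}

/-- The support function `Δᵢ(u) = min_{p ∈ Δᵢ} ⟨p, u⟩`, computed on the vertex set. -/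
noncomputable def suppFn {d : ℕ} (V : Finset (Fin d → ℚ)) (hV : V.Nonempty)
    (u : Fin d → ℤ) : ℚ :=
  V.inf' hV (fun p => ∑ j, p j * (u j : ℚ))

/-- The set `S = {(u,v) ∈ (σ^∨ ∩ M) × ℤ : -⌊Δⱼ(u)⌋ ≤ v ≤ Σ_{i ≠ j} ⌊Δᵢ(u)⌋}` is a
finitely generated subsemigroup of `M × ℤ`. -/
theorem stmt9 {d m : ℕ}
    (σ : Set (Fin d → ℚ))
    (Gσ : Finset (Fin d → ℚ)) (hσ : σ = coneSpan ↑Gσ)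
    (hσpointed : ∀ x ∈ σ, -x ∈ σ → x = 0)
    (V : Fin (m + 1) → Finset (Fin d → ℚ)) (hV : ∀ i, (V i).Nonempty)
    (Δ : Fin (m + 1) → Set (Fin d → ℚ))
    (hΔ : ∀ i, Δ i = convexHull ℚ ↑(V i) + σ)
    (hsum : (∀ p : Fin (m + 1) → (Fin d → ℚ), (∀ i, p i ∈ Δ i) → (∑ i, p i) ∈ σ) ∧
      {x | ∃ p : Fin (m + 1) → (Fin d → ℚ), (∀ i, p i ∈ Δ i) ∧ x = ∑ i, p i} ≠ σ)
    (j : Fin (m + 1))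
    (S : Set ((Fin d → ℤ) × ℤ))
    (hS : S = {x : (Fin d → ℤ) × ℤ |
      (∀ s ∈ σ, 0 ≤ ∑ k, s k * (x.1 k : ℚ)) ∧
      -⌊suppFn (V j) (hV j) x.1⌋ ≤ x.2 ∧
      x.2 ≤ ∑ i ∈ Finset.univ.filter (fun i => i ≠ j), ⌊suppFn (V i) (hV i) x.1⌋}) :
    (∀ x ∈ S, ∀ y ∈ S, x + y ∈ S) ∧
    (∃ F : Finset ((Fin d → ℤ) × ℤ), (↑F : Set ((Fin d → ℤ) × ℤ)) ⊆ S ∧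
      ∀ x ∈ S, x ∈ AddSubmonoid.closure (↑F : Set ((Fin d → ℤ) × ℤ))) := by
  classical
  have hGσsub : ∀ s ∈ Gσ, s ∈ σ := by
    intro s hs
    rw [hσ]
    refine ⟨1, fun _ => 1, fun _ => s, fun _ => zero_le_one, fun _ => hs, by simp⟩
  have hdual : ∀ u : Fin d → ℤ, (∀ s ∈ Gσ, 0 ≤ ∑ k, s k * (u k : ℚ)) →
      ∀ s ∈ σ, 0 ≤ ∑ k, s k * (u k : ℚ) := by
    intro u hG s hs
    rw [hσ] at hs
    obtain ⟨n, c, g, hc, hg, rfl⟩ := hs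
    have heq : ∑ k, (∑ t, c t • g t) k * (u k : ℚ) =
        ∑ t, c t * ∑ k, g t k * (u k : ℚ) := by
      simp_rw [Finset.sum_apply, Pi.smul_apply, smul_eq_mul, Finset.sum_mul,
        Finset.mul_sum, mul_assoc]
      rw [Finset.sum_comm]
    rw [heq]
    exact Finset.sum_nonneg fun t _ => mul_nonneg (hc t) (hG _ (hg t))
  set π : (((Fin d ⊕ Unit) ⊕ Fin (m + 1)) → ℤ) →+ (Fin d → ℤ) × ℤ := AddMonoidHom.mk'
    (fun x => (fun k => x (.inl (.inl k)), x (.inl (.inr ())))) (fun a b => rfl) with hπ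
  set rσ : (Fin d → ℚ) → (((Fin d ⊕ Unit) ⊕ Fin (m + 1)) → ℚ) := fun s => Sum.elim (Sum.elim s 0) 0 with hrσ
  set rj : (Fin d → ℚ) → (((Fin d ⊕ Unit) ⊕ Fin (m + 1)) → ℚ) := fun p => Sum.elim (Sum.elim p 1) 0 with hrj
  set rv : ((Fin d ⊕ Unit) ⊕ Fin (m + 1)) → ℚ := Sum.elim (Sum.elim 0 (-1)) (fun i => if i = j then 0 else 1) with hrv
  set ri : Fin (m + 1) → (Fin d → ℚ) → (((Fin d ⊕ Unit) ⊕ Fin (m + 1)) → ℚ) :=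
    fun i p => Sum.elim (Sum.elim p 0) (fun i' => if i' = i then -1 else 0) with hri
  set L : Finset (((Fin d ⊕ Unit) ⊕ Fin (m + 1)) → ℚ) := Gσ.image rσ ∪ (V j).image rj ∪ {rv} ∪
    (Finset.univ.filter (· ≠ j)).biUnion (fun i => (V i).image (ri i)) with hL
  set T : Set (((Fin d ⊕ Unit) ⊕ Fin (m + 1)) → ℤ) := {x | ∀ ℓ ∈ L, 0 ≤ ∑ i, ℓ i * (x i : ℚ)} with hT
  have hsumσ : ∀ (s : Fin d → ℚ) (x : ((Fin d ⊕ Unit) ⊕ Fin (m + 1)) → ℤ),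
      ∑ i, rσ s i * (x i : ℚ) = ∑ k, s k * (x (.inl (.inl k)) : ℚ) := by
    intro s x
    simp [hrσ, Fintype.sum_sum_type]
  have hsumj : ∀ (p : Fin d → ℚ) (x : ((Fin d ⊕ Unit) ⊕ Fin (m + 1)) → ℤ),
      ∑ i, rj p i * (x i : ℚ) =
        (∑ k, p k * (x (.inl (.inl k)) : ℚ)) + (x (.inl (.inr ())) : ℚ) := by
    intro p x
    simp [hrj, Fintype.sum_sum_type]
  have hsumv : ∀ (x : ((Fin d ⊕ Unit) ⊕ Fin (m + 1)) → ℤ),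
      ∑ i, rv i * (x i : ℚ) =
        -(x (.inl (.inr ())) : ℚ) +
          ∑ i ∈ Finset.univ.filter (fun i => i ≠ j), (x (.inr i) : ℚ) := by
    intro x
    simp only [hrv, Fintype.sum_sum_type, Sum.elim_inl, Sum.elim_inr, Pi.zero_apply,
      Pi.neg_apply, Pi.one_apply, zero_mul, Finset.sum_const_zero, zero_add,
      Finset.univ_unique, PUnit.default_eq_unit, Finset.sum_singleton, neg_mul, one_mul,
      ite_mul]
    congr 1
    rw [Finset.sum_filter]
    apply Finset.sum_congr rfl
    intro i _
    by_cases h : i = j <;> simp [h]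
  have hsumi : ∀ (i : Fin (m + 1)) (p : Fin d → ℚ) (x : ((Fin d ⊕ Unit) ⊕ Fin (m + 1)) → ℤ),
      ∑ i', ri i p i' * (x i' : ℚ) =
        (∑ k, p k * (x (.inl (.inl k)) : ℚ)) - (x (.inr i) : ℚ) := by
    intro i p x
    simp only [hri, Fintype.sum_sum_type, Sum.elim_inl, Sum.elim_inr, Pi.zero_apply,
      zero_mul, Finset.sum_const_zero, add_zero, ite_mul, neg_mul, one_mul]
    congr 1
    rw [Finset.sum_ite_eq' Finset.univ i (fun i' => -(x (.inr i') : ℚ))]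
    simp only [Finset.mem_univ, if_true]
    ring
  -- membership in T unfolded
  have hTmem : ∀ x : ((Fin d ⊕ Unit) ⊕ Fin (m + 1)) → ℤ, x ∈ T ↔
      ((∀ s ∈ Gσ, 0 ≤ ∑ i, rσ s i * (x i : ℚ)) ∧
       (∀ p ∈ V j, 0 ≤ ∑ i, rj p i * (x i : ℚ)) ∧
       (0 ≤ ∑ i, rv i * (x i : ℚ)) ∧
       (∀ i : Fin (m + 1), i ≠ j → ∀ p ∈ V i, 0 ≤ ∑ i', ri i p i' * (x i' : ℚ))) := by
    intro x
    constructor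
    · intro hx
      refine ⟨fun s hs => hx _ ?_, fun p hp => hx _ ?_, hx _ ?_, fun i hi p hp => hx _ ?_⟩
      · exact Finset.mem_union_left _ (Finset.mem_union_left _
          (Finset.mem_union_left _ (Finset.mem_image_of_mem _ hs)))
      · exact Finset.mem_union_left _ (Finset.mem_union_left _
          (Finset.mem_union_right _ (Finset.mem_image_of_mem _ hp)))
      · exact Finset.mem_union_left _ (Finset.mem_union_right _ (Finset.mem_singleton_self _))
      · exact Finset.mem_union_right _ (Finset.mem_biUnion.2
          ⟨i, Finset.mem_filter.2 ⟨Finset.mem_univ _, hi⟩, Finset.mem_image_of_mem _ hp⟩)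
    · rintro ⟨h1, h2, h3, h4⟩ ℓ hℓ
      simp only [hL, Finset.mem_union, Finset.mem_image, Finset.mem_singleton,
        Finset.mem_biUnion, Finset.mem_filter, Finset.mem_univ, true_and] at hℓ
      rcases hℓ with (((⟨s, hs, rfl⟩ | ⟨p, hp, rfl⟩) | rfl) | ⟨i, hi, p, hp, rfl⟩)
      · exact h1 s hs
      · exact h2 p hp
      · exact h3
      · exact h4 i hi p hp
  -- S = π '' T
  have hST : S = π '' T := by
    apply Set.Subset.antisymm
    · rintro ⟨u, v⟩ hx
      rw [hS] at hx
      obtain ⟨h1, h2, h3⟩ := hx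
      dsimp only at h1 h2 h3
      set x : ((Fin d ⊕ Unit) ⊕ Fin (m + 1)) → ℤ := Sum.elim (Sum.elim u (fun _ => v))
        (fun i => ⌊suppFn (V i) (hV i) u⌋) with hx
      refine ⟨x, ?_, rfl⟩
      rw [hTmem]
      refine ⟨?_, ?_, ?_, ?_⟩
      · intro s hs
        rw [hsumσ]
        exact h1 s (hGσsub s hs)
      · intro p hp
        rw [hsumj]
        have hfl : (⌊suppFn (V j) (hV j) u⌋ : ℚ) ≤ ∑ k, p k * (u k : ℚ) :=
          le_trans (Int.floor_le _) (Finset.inf'_le _ hp)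
        have h2' : (0 : ℚ) ≤ (v : ℚ) + (⌊suppFn (V j) (hV j) u⌋ : ℚ) := by
          have : (0 : ℤ) ≤ v + ⌊suppFn (V j) (hV j) u⌋ := by omega
          exact_mod_cast this
        simp only [Sum.elim_inl, Sum.elim_inr, hx]
        linarith
      · rw [hsumv]
        simp only [Sum.elim_inl, Sum.elim_inr, hx]
        have : (v : ℚ) ≤ ∑ i ∈ Finset.univ.filter (fun i => i ≠ j),
            (⌊suppFn (V i) (hV i) u⌋ : ℚ) := by
          rw [← Int.cast_sum]
          exact_mod_cast h3
        linarith
      · intro i hi p hp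
        rw [hsumi]
        simp only [Sum.elim_inl, Sum.elim_inr, hx]
        have : (⌊suppFn (V i) (hV i) u⌋ : ℚ) ≤ ∑ k, p k * (u k : ℚ) :=
          le_trans (Int.floor_le _) (Finset.inf'_le _ hp)
        linarith
    · rintro _ ⟨x, hx, rfl⟩
      rw [hTmem] at hx
      obtain ⟨h1, h2, h3, h4⟩ := hx
      rw [hS]
      set u : Fin d → ℤ := fun k => x (.inl (.inl k)) with hu
      set v : ℤ := x (.inl (.inr ())) with hv
      have hπx : π x = (u, v) := rfl
      rw [hπx]
      simp only [Set.mem_setOf_eq]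
      have hwle : ∀ i : Fin (m + 1), i ≠ j → x (.inr i) ≤ ⌊suppFn (V i) (hV i) u⌋ := by
        intro i hi
        rw [Int.le_floor]
        apply Finset.le_inf'
        intro p hp
        have := h4 i hi p hp
        rw [hsumi] at this
        linarith
      refine ⟨?_, ?_, ?_⟩
      · apply hdual
        intro s hs
        have := h1 s hs
        rwa [hsumσ] at this
      · have hle : (-v : ℚ) ≤ suppFn (V j) (hV j) u := by
          apply Finset.le_inf'
          intro p hp
          have := h2 p hp
          rw [hsumj] at this
          push_cast
          linarith
        have h' : (-v : ℤ) ≤ ⌊suppFn (V j) (hV j) u⌋ := by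
          rw [Int.le_floor]; exact_mod_cast hle
        show -⌊suppFn (V j) (hV j) u⌋ ≤ v
        omega
      · have h3' := h3
        rw [hsumv] at h3'
        have hv' : (v : ℚ) ≤ ∑ i ∈ Finset.univ.filter (fun i => i ≠ j), (x (.inr i) : ℚ) := by
          linarith
        have hv'' : v ≤ ∑ i ∈ Finset.univ.filter (fun i => i ≠ j), x (.inr i) := by
          exact_mod_cast hv'
        exact le_trans hv'' (Finset.sum_le_sum fun i hi =>
          hwle i (Finset.mem_filter.1 hi).2)
  constructor
  · -- closed under addition
    intro a ha b hb
    rw [hST] at ha hb ⊢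
    obtain ⟨xa, hxa, rfl⟩ := ha
    obtain ⟨xb, hxb, rfl⟩ := hb
    refine ⟨xa + xb, ?_, (map_add π xa xb).symm⟩
    intro ℓ hℓ
    have h1 := hxa ℓ hℓ
    have h2 := hxb ℓ hℓ
    have : ∑ i, ℓ i * ((xa + xb) i : ℚ) =
        (∑ i, ℓ i * (xa i : ℚ)) + ∑ i, ℓ i * (xb i : ℚ) := by
      rw [← Finset.sum_add_distrib]
      apply Finset.sum_congr rfl
      intro i _
      simp only [Pi.add_apply]
      push_cast
      ring
    rw [this]
    linarith
  · obtain ⟨F, hF1, hF2⟩ := gordanQ L π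
    rw [← hT] at hF1 hF2
    exact ⟨F, hST ▸ hF1, fun x hx => hF2 (hST ▸ hx)⟩
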